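/- For every cardinal α with 2 ≤ α, every poset is (α,2)-representable. -/

import Mathlib

open Cardinal

universe u

/-- A poset `P` is `(α,β)`-representable if there is a set `X` and a map `h : P → Set X`
which is an order-embedding, sends existing infima of sets of cardinality `< α` to
intersections, and existing suprema of sets of cardinality `< β` to unions. -/
def IsABRepresentable (α β : Cardinal.{u}) (P : Type u) [PartialOrder P] : Prop :=
  ∃ (X : Type u) (h : P → Set X),
    (∀ p q : P, p ≤ q ↔ h p ⊆ h q) ∧
    (∀ (S : Set P) (m : P), #S < α → IsGLB S m → h m = ⋂ s ∈ S, h s) ∧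
    (∀ (T : Set P) (j : P), #T < β → IsLUB T j → h j = ⋃ t ∈ T, h t)

theorem representable_alpha_two (α : Cardinal.{u}) (hα : 2 ≤ α)
    (P : Type u) [PartialOrder P] :
    IsABRepresentable α 2 P := by
  refine ⟨{x : P // ¬ IsBot x}, fun p => {x | x.1 ≤ p}, ?_, ?_, ?_⟩
  · intro p q
    constructor
    · intro hpq x hx
      exact le_trans hx hpq
    · intro hsub
      by_cases hb : IsBot p
      · exact hb q
      · exact hsub (show (⟨p, hb⟩ : {x : P // ¬ IsBot x}) ∈ {x | x.1 ≤ p} from le_rfl)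
  · intro S m _ hglb
    ext x
    simp only [Set.mem_setOf_eq, Set.mem_iInter]
    constructor
    · intro hxm s hs
      exact le_trans hxm (hglb.1 hs)
    · intro hlb
      exact hglb.2 (fun s hs => hlb s hs)
  · intro T j hT2 hlub
    have hTs : T.Subsingleton := by
      rw [← Cardinal.mk_le_one_iff_set_subsingleton]
      have h2 : (2 : Cardinal) = Order.succ 1 := by
        simpa using (Cardinal.nat_succ 1)
      exact Order.lt_succ_iff.mp (h2 ▸ hT2)
    rcases T.eq_empty_or_nonempty with rfl | ⟨t, ht⟩
    · have hbot : IsBot j := fun y => hlub.2 (by simp)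
      ext x
      simp only [Set.mem_setOf_eq, Set.mem_empty_iff_false, Set.iUnion_of_empty,
        Set.iUnion_empty, Set.mem_iUnion, exists_false, iff_false, exists_prop, false_and]
      intro hxj
      exact x.2 (fun y => le_trans hxj (hbot y))
    · have hTeq : T = {t} := by
        ext s; constructor
        · intro hs; exact hTs hs ht
        · rintro rfl; exact ht
      subst hTeq
      have : j = t := (isLUB_singleton.unique hlub).symm
      subst this
      ext x
      simp
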